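/- Let M be a Markov decision process with state space X, let R: X × A × X → ℝ be a reward function, γ ∈ (0,1) a constant discount factor, and Φ: X → ℝ any bounded potential function. Define the shaped reward R'(x, a, x') = R(x, a, x') + γ·Φ(x') − Φ(x). Then for any stationary policy π, the value function under R' equals the value function under R minus Φ: U'^π(x) = U^π(x) − Φ(x) for all states x. Consequently, a policy is optimal for the shaped reward if and only if it is optimal for the original reward. -/

import Mathlib

open ProbabilityTheory MeasureTheory

/-- The kernel of the Markov chain induced on the state space by following the
stationary (deterministic) policy `π` in an MDP with transition kernel `p`. -/
noncomputable def policyKernel {X A : Type*} [MeasurableSpace X] [MeasurableSpace A]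
    (p : Kernel (X × A) X) (π : X → A) (hπ : Measurable π) : Kernel X X :=
  p.comap (fun x => (x, π x)) (measurable_id.prodMk hπ)

/-- `n`-step iterate of a kernel. -/
noncomputable def nStep {X : Type*} [MeasurableSpace X] (κ : Kernel X X) : ℕ → Kernel X X
  | 0 => Kernel.id
  | n + 1 => (nStep κ n) ∘ₖ κ

/-- The value function of the stationary policy `π`:
`U^π(x) = Σ_n γ^n E[R(X_n, π(X_n), X_{n+1}) | X_0 = x]`. -/
noncomputable def valueFn {X A : Type*} [MeasurableSpace X] [MeasurableSpace A]
    (p : Kernel (X × A) X) (R : X → A → X → ℝ) (γ : ℝ)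
    (π : X → A) (hπ : Measurable π) (x : X) : ℝ :=
  ∑' n : ℕ, γ ^ n *
    ∫ y, (∫ z, R y (π y) z ∂(p (y, π y))) ∂(nStep (policyKernel p π hπ) n x)

lemma integrable_of_bdd' {X : Type*} [MeasurableSpace X] {μ : Measure X} [IsFiniteMeasure μ]
    {f : X → ℝ} (hf : AEStronglyMeasurable f μ) {C : ℝ} (hb : ∀ y, |f y| ≤ C) :
    Integrable f μ :=
  ⟨hf, HasFiniteIntegral.of_bounded (ae_of_all _ fun y => by
    simpa [Real.norm_eq_abs] using hb y)⟩

lemma abs_integral_le' {X : Type*} [MeasurableSpace X] (μ : Measure X) [IsProbabilityMeasure μ]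
    {f : X → ℝ} {C : ℝ} (hb : ∀ y, |f y| ≤ C) : |∫ y, f y ∂μ| ≤ C := by
  have := norm_integral_le_of_norm_le_const (μ := μ) (C := C) (f := f)
    (ae_of_all _ fun y => by simpa [Real.norm_eq_abs] using hb y)
  simpa [Real.norm_eq_abs, measure_univ] using this

lemma integral_comp_aux {X : Type*} [MeasurableSpace X] (η κ : Kernel X X)
    [IsMarkovKernel η] [IsMarkovKernel κ] (x : X) {f : X → ℝ} (hf : Measurable f)
    {C : ℝ} (hb : ∀ y, |f y| ≤ C) :
    ∫ z, f z ∂((η ∘ₖ κ) x) = ∫ y, ∫ z, f z ∂(η y) ∂(κ x) := by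
  have h1 : (η ∘ₖ κ) x = ((κ x) ⊗ₘ η).map Prod.snd := by
    ext s hs
    rw [Measure.map_apply measurable_snd hs, Kernel.comp_apply' _ _ _ hs,
      Measure.compProd_apply (measurable_snd hs)]
    rfl
  rw [h1, MeasureTheory.integral_map measurable_snd.aemeasurable hf.aestronglyMeasurable]
  exact Measure.integral_compProd
      (integrable_of_bdd' (f := fun p : X × X => f p.2)
        (hf.comp measurable_snd).aestronglyMeasurable (fun p : X × X => hb p.2))

lemma policyKernel_markov {X A : Type*} [MeasurableSpace X] [MeasurableSpace A]
    (p : Kernel (X × A) X) [IsMarkovKernel p] (π : X → A) (hπ : Measurable π) :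
    IsMarkovKernel (policyKernel p π hπ) := by
  constructor
  intro a
  rw [policyKernel, Kernel.comap_apply]
  infer_instance

lemma nStep_markov {X : Type*} [MeasurableSpace X] (κ : Kernel X X) [IsMarkovKernel κ]
    (n : ℕ) : IsMarkovKernel (nStep κ n) := by
  induction n with
  | zero => rw [show nStep κ 0 = Kernel.id from rfl]; infer_instance
  | succ n ih =>
    haveI := ih
    rw [show nStep κ (n + 1) = nStep κ n ∘ₖ κ from rfl]
    infer_instance

lemma nStep_succ' {X : Type*} [MeasurableSpace X] (κ : Kernel X X) [IsMarkovKernel κ]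
    (n : ℕ) : nStep κ (n + 1) = κ ∘ₖ nStep κ n := by
  induction n with
  | zero =>
    show Kernel.id ∘ₖ κ = κ ∘ₖ Kernel.id
    rw [Kernel.id_comp, Kernel.comp_id]
  | succ n ih =>
    haveI := nStep_markov κ n
    calc nStep κ (n + 2) = nStep κ (n + 1) ∘ₖ κ := rfl
      _ = (κ ∘ₖ nStep κ n) ∘ₖ κ := by rw [ih]
      _ = κ ∘ₖ (nStep κ n ∘ₖ κ) := by rw [Kernel.comp_assoc]
      _ = κ ∘ₖ nStep κ (n + 1) := rfl

theorem stmt_4 {X A : Type*} [MeasurableSpace X] [MeasurableSpace A]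
    (p : Kernel (X × A) X) [IsMarkovKernel p]
    (R : X → A → X → ℝ) (γ : ℝ) (hγ0 : 0 < γ) (hγ1 : γ < 1)
    (Φ : X → ℝ)
    (hΦmeas : Measurable Φ)
    (hRbdd : ∃ C : ℝ, ∀ x a x', |R x a x'| ≤ C)
    (hΦbdd : ∃ C : ℝ, ∀ x, |Φ x| ≤ C)
    (hRmeas : Measurable fun q : (X × A) × X => R q.1.1 q.1.2 q.2)
    -- the shaped reward `R'(x, a, x') = R(x, a, x') + γ Φ(x') − Φ(x)`
    (R' : X → A → X → ℝ)
    (hR' : ∀ x a x', R' x a x' = R x a x' + γ * Φ x' - Φ x) :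
    -- (1) the shaped value function equals the original one minus the potential
    (∀ (π : X → A) (hπ : Measurable π) (x : X),
      valueFn p R' γ π hπ x = valueFn p R γ π hπ x - Φ x) ∧
    -- (2) a policy is optimal for the shaped reward iff it is optimal for the original one
    (∀ (π : X → A) (hπ : Measurable π),
      (∀ (σ : X → A) (hσ : Measurable σ) (x : X),
          valueFn p R' γ σ hσ x ≤ valueFn p R' γ π hπ x) ↔
      (∀ (σ : X → A) (hσ : Measurable σ) (x : X),
          valueFn p R γ σ hσ x ≤ valueFn p R γ π hπ x)) := by
  obtain ⟨C₁, hC₁⟩ := hRbdd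
  obtain ⟨C₂, hC₂⟩ := hΦbdd
  replace hC₁ : ∀ x a x', |R x a x'| ≤ max C₁ 0 := fun x a x' => (hC₁ x a x').trans (le_max_left _ _)
  replace hC₂ : ∀ x, |Φ x| ≤ max C₂ 0 := fun x => (hC₂ x).trans (le_max_left _ _)
  set D₁ : ℝ := max C₁ 0 with hD₁def
  set D₂ : ℝ := max C₂ 0 with hD₂def
  have hD₁ : 0 ≤ D₁ := le_max_right _ _
  have hD₂ : 0 ≤ D₂ := le_max_right _ _
  have key : ∀ (π : X → A) (hπ : Measurable π) (x : X),
      valueFn p R' γ π hπ x = valueFn p R γ π hπ x - Φ x := by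
    intro π hπ x
    set κ : Kernel X X := policyKernel p π hπ with hκdef
    haveI hκM : IsMarkovKernel κ := policyKernel_markov p π hπ
    haveI hnM : ∀ n, IsMarkovKernel (nStep κ n) := nStep_markov κ
    have hκ : ∀ y, κ y = p (y, π y) := fun y => rfl
    set r : X → ℝ := fun y => ∫ z, R y (π y) z ∂(p (y, π y)) with hrdef
    set g : X → ℝ := fun y => ∫ z, Φ z ∂(κ y) with hgdef
    set Ψ : ℕ → ℝ := fun n => ∫ y, Φ y ∂(nStep κ n x) with hΨdef
    -- measurability
    have hrm : Measurable r := by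
      have h0 : StronglyMeasurable fun q : X × A => ∫ z, R q.1 q.2 z ∂(p q) :=
        hRmeas.stronglyMeasurable.integral_kernel_prod_right'
      exact h0.measurable.comp (measurable_id.prodMk hπ)
    have hgm : Measurable g := by
      have h0 : StronglyMeasurable fun y : X => ∫ z, (fun q : X × X => Φ q.2) (y, z) ∂(κ y) :=
        (hΦmeas.comp measurable_snd).stronglyMeasurable.integral_kernel_prod_right'
      exact h0.measurable
    -- bounds
    have hrb : ∀ y, |r y| ≤ D₁ := fun y => abs_integral_le' _ (fun z => hC₁ y (π y) z)
    have hgb : ∀ y, |g y| ≤ D₂ := fun y => abs_integral_le' _ hC₂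
    have hΨb : ∀ n, |Ψ n| ≤ D₂ := fun n => abs_integral_le' _ hC₂
    -- inner integral decomposition
    have inner : ∀ y, (∫ z, R' y (π y) z ∂(p (y, π y))) = r y + γ * g y - Φ y := by
      intro y
      have hmz : Measurable fun z : X => R y (π y) z :=
        hRmeas.comp (measurable_prodMk_left : Measurable fun z : X => ((y, π y), z))
      have hRint : Integrable (fun z => R y (π y) z) (p (y, π y)) :=
        integrable_of_bdd' hmz.aestronglyMeasurable (fun z => hC₁ y (π y) z)
      have hΦint : Integrable (fun z => γ * Φ z) (p (y, π y)) :=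
        (integrable_of_bdd' hΦmeas.aestronglyMeasurable hC₂).const_mul γ
      have hsum : Integrable (fun z => R y (π y) z + γ * Φ z) (p (y, π y)) :=
        hRint.add hΦint
      simp only [hR']
      rw [integral_sub hsum (integrable_const (Φ y)),
        integral_add hRint hΦint, integral_const_mul]
      rw [← hκ y]
      simp [hrdef, hgdef, measure_univ, hκ y]
    -- outer integral decomposition
    have hstep : ∀ n, ∫ y, (∫ z, R' y (π y) z ∂(p (y, π y))) ∂(nStep κ n x)
        = (∫ y, r y ∂(nStep κ n x)) + γ * Ψ (n + 1) - Ψ n := by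
      intro n
      have hri : Integrable r (nStep κ n x) := integrable_of_bdd' hrm.aestronglyMeasurable hrb
      have hgi : Integrable g (nStep κ n x) := integrable_of_bdd' hgm.aestronglyMeasurable hgb
      have hΦi : Integrable Φ (nStep κ n x) := integrable_of_bdd' hΦmeas.aestronglyMeasurable hC₂
      have hΨs : Ψ (n + 1) = ∫ y, g y ∂(nStep κ n x) := by
        rw [hΨdef]
        simp only
        rw [nStep_succ' κ n, integral_comp_aux κ (nStep κ n) x hΦmeas hC₂]
      have hgi' : Integrable (fun y => γ * g y) (nStep κ n x) := hgi.const_mul γ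
      have hsum2 : Integrable (fun y => r y + γ * g y) (nStep κ n x) := hri.add hgi'
      rw [integral_congr_ae (ae_of_all _ inner),
        integral_sub hsum2 hΦi, integral_add hri hgi', integral_const_mul, hΨs]
    -- summability
    have hgeom : Summable fun n : ℕ => γ ^ n := summable_geometric_of_lt_one hγ0.le hγ1
    have hγpow : ∀ n : ℕ, |γ ^ n| = γ ^ n := fun n => abs_of_nonneg (pow_nonneg hγ0.le n)
    have hsa : Summable fun n : ℕ => γ ^ n * ∫ y, r y ∂(nStep κ n x) := by
      refine Summable.of_norm_bounded (g := fun n => D₁ * γ ^ n) (hgeom.mul_left D₁) fun n => ?_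
      rw [Real.norm_eq_abs, abs_mul, hγpow, mul_comm]
      exact mul_le_mul_of_nonneg_right (abs_integral_le' _ hrb) (pow_nonneg hγ0.le n)
    have hsb : Summable fun n : ℕ => γ ^ (n + 1) * Ψ (n + 1) - γ ^ n * Ψ n := by
      refine Summable.of_norm_bounded (g := fun n => (γ * D₂ + D₂) * γ ^ n)
        (hgeom.mul_left _) fun n => ?_
      rw [Real.norm_eq_abs]
      calc |γ ^ (n + 1) * Ψ (n + 1) - γ ^ n * Ψ n|
          ≤ |γ ^ (n + 1) * Ψ (n + 1)| + |γ ^ n * Ψ n| := abs_sub _ _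
        _ ≤ γ ^ (n + 1) * D₂ + γ ^ n * D₂ := by
            rw [abs_mul, abs_mul, hγpow, hγpow]
            exact add_le_add
              (mul_le_mul_of_nonneg_left (hΨb _) (pow_nonneg hγ0.le _))
              (mul_le_mul_of_nonneg_left (hΨb _) (pow_nonneg hγ0.le _))
        _ = (γ * D₂ + D₂) * γ ^ n := by ring
    -- rewrite the shaped value function
    have hV' : valueFn p R' γ π hπ x
        = ∑' n : ℕ, ((γ ^ n * ∫ y, r y ∂(nStep κ n x))
            + (γ ^ (n + 1) * Ψ (n + 1) - γ ^ n * Ψ n)) := by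
      unfold valueFn
      exact tsum_congr fun n => by rw [← hκdef, hstep n]; ring
    -- telescoping sum
    have hΨ0 : Ψ 0 = Φ x := by
      rw [hΨdef]
      simp only
      rw [show nStep κ 0 = Kernel.id from rfl, Kernel.id_apply,
        integral_dirac' _ _ hΦmeas.stronglyMeasurable]
    have htel : (∑' n : ℕ, (γ ^ (n + 1) * Ψ (n + 1) - γ ^ n * Ψ n)) = -(Φ x) := by
      set b : ℕ → ℝ := fun n => γ ^ n * Ψ n with hbdef
      have hlim : Filter.Tendsto b Filter.atTop (nhds 0) := by
        refine squeeze_zero_norm (fun n => ?_)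
          (by simpa using (tendsto_pow_atTop_nhds_zero_of_lt_one hγ0.le hγ1).const_mul D₂)
        rw [Real.norm_eq_abs, hbdef]
        simp only
        rw [abs_mul, hγpow, mul_comm]
        exact mul_le_mul_of_nonneg_right (hΨb n) (pow_nonneg hγ0.le n)
      have h1 := hsb.hasSum.tendsto_sum_nat
      have h2 : Filter.Tendsto (fun n => ∑ i ∈ Finset.range n,
          (γ ^ (i + 1) * Ψ (i + 1) - γ ^ i * Ψ i)) Filter.atTop (nhds (0 - b 0)) := by
        have : (fun n => ∑ i ∈ Finset.range n, (γ ^ (i + 1) * Ψ (i + 1) - γ ^ i * Ψ i))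
            = fun n => b n - b 0 := by
          funext n
          exact Finset.sum_range_sub b n
        rw [this]
        exact hlim.sub tendsto_const_nhds
      have := tendsto_nhds_unique h1 h2
      rw [this, hbdef]
      simp [hΨ0]
    rw [hV', Summable.tsum_add hsa hsb, htel]
    have : valueFn p R γ π hπ x = ∑' n : ℕ, γ ^ n * ∫ y, r y ∂(nStep κ n x) := by
      unfold valueFn
      rw [← hκdef]
    rw [this]
    ring
  refine ⟨key, fun π hπ => ⟨fun h σ hσ x => ?_, fun h σ hσ x => ?_⟩⟩
  · have := h σ hσ x
    rw [key σ hσ x, key π hπ x] at this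
    linarith
  · have := h σ hσ x
    have h2 : valueFn p R' γ σ hσ x = valueFn p R γ σ hσ x - Φ x := key σ hσ x
    have h3 : valueFn p R' γ π hπ x = valueFn p R γ π hπ x - Φ x := key π hπ x
    linarith
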